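/- If the expert closed-loop system is η-locally δ-ISS with class-K gain function γ, and for a fixed ε > 0 the test policy π satisfies sup over perturbations δ with ‖δ‖ ≤ ε of ‖π⋆(x_t^{π⋆}(ξ)+δ) − π(x_t^{π⋆}(ξ)+δ)‖ ≤ min{η, γ⁻¹(ε)} for all 0 ≤ t ≤ T−1, then the imitation gap satisfies max_{1≤t≤T} ‖x_t^π(ξ) − x_t^{π⋆}(ξ)‖ ≤ ε. -/

import Mathlib

open scoped BigOperators

/-- Closed-loop trajectory of `x_{t+1} = f(x_t, π(x_t) + Δ_t)` from initial condition `ξ`. -/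
noncomputable def traj {d m : ℕ}
    (f : EuclideanSpace ℝ (Fin d) → EuclideanSpace ℝ (Fin m) → EuclideanSpace ℝ (Fin d))
    (π : EuclideanSpace ℝ (Fin d) → EuclideanSpace ℝ (Fin m))
    (Δ : ℕ → EuclideanSpace ℝ (Fin m)) (ξ : EuclideanSpace ℝ (Fin d)) :
    ℕ → EuclideanSpace ℝ (Fin d)
  | 0 => ξ
  | t + 1 => f (traj f π Δ ξ t) (π (traj f π Δ ξ t) + Δ t)

/-- Class-K function: continuous, strictly increasing on `[0,∞)`, vanishing at `0`. -/
def ClassK (γ : ℝ → ℝ) : Prop :=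
  ContinuousOn γ (Set.Ici 0) ∧ StrictMonoOn γ (Set.Ici 0) ∧ γ 0 = 0

/-- Class-KL function: class K in the first argument, decreasing in the second. -/
def ClassKL (β : ℝ → ℕ → ℝ) : Prop :=
  (∀ t, ClassK fun s => β s t) ∧ ∀ s, 0 ≤ s → Antitone fun t => β s t

/-- The closed-loop system under policy `πs` is `η`-locally incrementally
input-to-state stable with comparison functions `β` (class KL) and `γ` (class K). -/
def LocallyDeltaISS {d m : ℕ}
    (f : EuclideanSpace ℝ (Fin d) → EuclideanSpace ℝ (Fin m) → EuclideanSpace ℝ (Fin d))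
    (πs : EuclideanSpace ℝ (Fin d) → EuclideanSpace ℝ (Fin m))
    (η : ℝ) (β : ℝ → ℕ → ℝ) (γ : ℝ → ℝ) : Prop :=
  ClassKL β ∧ ClassK γ ∧
    ∀ (ξ₁ ξ₂ : EuclideanSpace ℝ (Fin d)) (Δ : ℕ → EuclideanSpace ℝ (Fin m)),
      (∀ t, ‖Δ t‖ ≤ η) → ∀ t, ∀ ht : 0 < t,
        ‖traj f πs Δ ξ₁ t - traj f πs (fun _ => 0) ξ₂ t‖ ≤
          β ‖ξ₁ - ξ₂‖ t +
            γ ((Finset.range t).sup' (Finset.nonempty_range_iff.mpr ht.ne') fun k => ‖Δ k‖)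


lemma traj_aux {d m : ℕ}
    (f : EuclideanSpace ℝ (Fin d) → EuclideanSpace ℝ (Fin m) → EuclideanSpace ℝ (Fin d))
    (πs π : EuclideanSpace ℝ (Fin d) → EuclideanSpace ℝ (Fin m))
    (Δ : ℕ → EuclideanSpace ℝ (Fin m)) (ξ : EuclideanSpace ℝ (Fin d)) (s : ℕ)
    (h : ∀ k < s, Δ k = π (traj f π (fun _ => 0) ξ k) - πs (traj f π (fun _ => 0) ξ k)) :
    traj f πs Δ ξ s = traj f π (fun _ => 0) ξ s := by
  induction s with
  | zero => rfl
  | succ s ih =>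
    have ihs := ih (fun k hk => h k (hk.trans (Nat.lt_succ_self s)))
    simp only [traj, ihs, h s (Nat.lt_succ_self s)]
    have harg : ∀ a b : EuclideanSpace ℝ (Fin m), a + (b - a) = b + 0 := fun a b => by abel
    rw [harg]

/-- Proposition 1 (TaSIL): if the expert closed-loop system is `η`-locally δ-ISS with class-K
gain `γ`, and the test policy `π` is within `min{η, γ⁻¹(ε)}` of the expert `π⋆` in an
`ε`-tube around the expert trajectory, then the imitation gap is at most `ε`.
Here `c` plays the role of `γ⁻¹(ε)`, i.e. `0 ≤ c` and `γ c ≤ ε`. -/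
theorem stmt0 {d m : ℕ}
    (f : EuclideanSpace ℝ (Fin d) → EuclideanSpace ℝ (Fin m) → EuclideanSpace ℝ (Fin d))
    (πs π : EuclideanSpace ℝ (Fin d) → EuclideanSpace ℝ (Fin m))
    (η ε c : ℝ) (β : ℝ → ℕ → ℝ) (γ : ℝ → ℝ) (T : ℕ) (ξ : EuclideanSpace ℝ (Fin d))
    (hISS : LocallyDeltaISS f πs η β γ)
    (hη : 0 < η) (hε : 0 < ε) (hc : 0 ≤ c) (hγc : γ c ≤ ε)
    (hclose : ∀ t < T, ∀ δv : EuclideanSpace ℝ (Fin d), ‖δv‖ ≤ ε →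
      ‖πs (traj f πs (fun _ => 0) ξ t + δv) - π (traj f πs (fun _ => 0) ξ t + δv)‖ ≤ min η c) :
    ∀ t, 1 ≤ t → t ≤ T →
      ‖traj f π (fun _ => 0) ξ t - traj f πs (fun _ => 0) ξ t‖ ≤ ε := by
  obtain ⟨hKL, hK, hiss⟩ := hISS
  intro t
  induction t using Nat.strong_induction_on with
  | _ t IH =>
  intro ht1 htT
  set x := traj f π (fun _ => 0) ξ with hx
  set y := traj f πs (fun _ => 0) ξ with hy
  have hgap : ∀ k < t, ‖x k - y k‖ ≤ ε := by
    intro k hk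
    rcases Nat.eq_zero_or_pos k with rfl | hk1
    · have : x 0 - y 0 = 0 := by simp [hx, hy, traj]
      simp [this, hε.le]
    · exact IH k hk hk1 (hk.le.trans htT)
  set Δ : ℕ → EuclideanSpace ℝ (Fin m) :=
    fun k => if k < t then π (x k) - πs (x k) else 0 with hΔ
  have hΔbound : ∀ k, ‖Δ k‖ ≤ min η c := by
    intro k
    by_cases hk : k < t
    · have h1 : ‖x k - y k‖ ≤ ε := hgap k hk
      have h2 := hclose k (lt_of_lt_of_le hk htT) (x k - y k) h1
      have h3 : y k + (x k - y k) = x k := by abel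
      rw [h3] at h2
      have h4 : Δ k = π (x k) - πs (x k) := by simp [hΔ, hk]
      rw [h4, norm_sub_rev]
      exact h2
    · have : Δ k = 0 := by simp [hΔ, hk]
      simp [this, le_min hη.le hc]
  have htraj : traj f πs Δ ξ t = x t :=
    traj_aux f πs π Δ ξ t (fun k hk => by simp [hΔ, hk]; rfl)
  have ht0 : 0 < t := ht1
  have hiss' := hiss ξ ξ Δ (fun k => (hΔbound k).trans (min_le_left _ _)) t ht0
  rw [htraj, sub_self, norm_zero] at hiss'
  have hβ0 : β 0 t = 0 := (hKL.1 t).2.2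
  set S := (Finset.range t).sup' (Finset.nonempty_range_iff.mpr ht0.ne') fun k => ‖Δ k‖ with hS
  have hS0 : 0 ≤ S :=
    le_trans (norm_nonneg (Δ 0)) (Finset.le_sup' (fun k => ‖Δ k‖) (Finset.mem_range.mpr ht0))
  have hSc : S ≤ c :=
    Finset.sup'_le _ _ fun k _ => (hΔbound k).trans (min_le_right _ _)
  have hγS : γ S ≤ γ c := hK.2.1.monotoneOn (Set.mem_Ici.mpr hS0) (Set.mem_Ici.mpr hc) hSc
  calc ‖x t - y t‖ ≤ β 0 t + γ S := hiss'
    _ = γ S := by rw [hβ0, zero_add]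
    _ ≤ ε := hγS.trans hγc
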